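/- Let n₊, n₋ be positive real numbers and k a real number with S := 2(n₊²+n₋²) − k² > 0. Define q₁ = (n₋²−n₊²+k√S)/S, q₂ = (n₋²−n₊²−k√S)/S, and Δz = π√S/(n₊ n₋), and assume 0 < q₁ < 2 and 0 < q₂ < 2. With w₂ = (−2−(q₁+q₂)+√Δ₊)/2 and w₃ = (2−(q₁+q₂)−√Δ₋)/2 (where Δ± = 4 ± 4(q₁+q₂) + (q₁−q₂)²), the flux quantization identities hold: (Δz/(2π))·(w₃/(w₃+q₁) − w₂/(w₂+q₁)) = (n₋ − n₊ − k)/(2 n₊ n₋) and (Δz/(2π))·(w₃/(w₃+q₂) − w₂/(w₂+q₂)) = (n₋ − n₊ + k)/(2 n₊ n₋). -/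

import Mathlib

/-- Flux quantization of the two gauge fields through the spindle:
`(Δz/2π)[w/(w+qᵢ)]_{w₂}^{w₃} = (nminus − nplus ∓ k)/(2 nplus nminus)`. -/
theorem spindle_flux_quantization (nplus nminus k : ℝ) (hplus : 0 < nplus) (hminus : 0 < nminus)
    (hS : 0 < 2 * (nplus ^ 2 + nminus ^ 2) - k ^ 2)
    (q₁ q₂ Δz : ℝ)
    (hq₁ : q₁ = (nminus ^ 2 - nplus ^ 2 + k * Real.sqrt (2 * (nplus ^ 2 + nminus ^ 2) - k ^ 2)) /
      (2 * (nplus ^ 2 + nminus ^ 2) - k ^ 2))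
    (hq₂ : q₂ = (nminus ^ 2 - nplus ^ 2 - k * Real.sqrt (2 * (nplus ^ 2 + nminus ^ 2) - k ^ 2)) /
      (2 * (nplus ^ 2 + nminus ^ 2) - k ^ 2))
    (hΔz : Δz = Real.pi * Real.sqrt (2 * (nplus ^ 2 + nminus ^ 2) - k ^ 2) / (nplus * nminus))
    (hq₁pos : 0 < q₁) (hq₁lt : q₁ < 2) (hq₂pos : 0 < q₂) (hq₂lt : q₂ < 2)
    (w₂ w₃ : ℝ)
    (hw₂ : w₂ = (-2 - (q₁ + q₂) + Real.sqrt (4 + 4 * (q₁ + q₂) + (q₁ - q₂) ^ 2)) / 2)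
    (hw₃ : w₃ = (2 - (q₁ + q₂) - Real.sqrt (4 - 4 * (q₁ + q₂) + (q₁ - q₂) ^ 2)) / 2) :
    Δz / (2 * Real.pi) * (w₃ / (w₃ + q₁) - w₂ / (w₂ + q₁)) =
      (nminus - nplus - k) / (2 * nplus * nminus) ∧
    Δz / (2 * Real.pi) * (w₃ / (w₃ + q₂) - w₂ / (w₂ + q₂)) =
      (nminus - nplus + k) / (2 * nplus * nminus) := by
  set S : ℝ := 2 * (nplus ^ 2 + nminus ^ 2) - k ^ 2 with hSdef
  set s : ℝ := Real.sqrt S with hsdef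
  have hs0 : 0 < s := Real.sqrt_pos.mpr hS
  have hsne : s ≠ 0 := ne_of_gt hs0
  have hs2 : s ^ 2 = S := Real.sq_sqrt hS.le
  have hSne : S ≠ 0 := ne_of_gt hS
  have hq₁' : q₁ * s ^ 2 = nminus ^ 2 - nplus ^ 2 + k * s := by
    rw [hq₁, hs2]; field_simp
  have hq₂' : q₂ * s ^ 2 = nminus ^ 2 - nplus ^ 2 - k * s := by
    rw [hq₂, hs2]; field_simp
  have hqsum : (q₁ + q₂) * s ^ 2 = 2 * (nminus ^ 2 - nplus ^ 2) := by
    linear_combination hq₁' + hq₂'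
  have hqdiff : (q₁ - q₂) * s = 2 * k := by
    have h : ((q₁ - q₂) * s) * s = (2 * k) * s := by linear_combination hq₁' - hq₂'
    exact mul_right_cancel₀ hsne h
  -- the two square roots
  have hDp : Real.sqrt (4 + 4 * (q₁ + q₂) + (q₁ - q₂) ^ 2) = 4 * nminus / s := by
    rw [show 4 + 4 * (q₁ + q₂) + (q₁ - q₂) ^ 2 = (4 * nminus / s) ^ 2 by
      field_simp
      linear_combination 4 * hs2 + 4 * hqsum + ((q₁ - q₂) * s + 2 * k) * hqdiff]
    exact Real.sqrt_sq (by positivity)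
  have hDm : Real.sqrt (4 - 4 * (q₁ + q₂) + (q₁ - q₂) ^ 2) = 4 * nplus / s := by
    rw [show 4 - 4 * (q₁ + q₂) + (q₁ - q₂) ^ 2 = (4 * nplus / s) ^ 2 by
      field_simp
      linear_combination 4 * hs2 - 4 * hqsum + ((q₁ - q₂) * s + 2 * k) * hqdiff]
    exact Real.sqrt_sq (by positivity)
  -- explicit forms of w₂, w₃
  have hw₂s : w₂ * s ^ 2 = nplus ^ 2 - (s - nminus) ^ 2 := by
    rw [hw₂, hDp]
    field_simp
    linear_combination (-1) * hqsum
  have hw₃s : w₃ * s ^ 2 = (s - nplus) ^ 2 - nminus ^ 2 := by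
    rw [hw₃, hDm]
    field_simp
    linear_combination (-1) * hqsum
  -- denominators
  have hd₁ : (w₃ + q₁) * s = s - 2 * nplus + k := by
    have h : ((w₃ + q₁) * s) * s = (s - 2 * nplus + k) * s := by linear_combination hw₃s + hq₁'
    exact mul_right_cancel₀ hsne h
  have hd₂ : (w₂ + q₁) * s = 2 * nminus + k - s := by
    have h : ((w₂ + q₁) * s) * s = (2 * nminus + k - s) * s := by linear_combination hw₂s + hq₁'
    exact mul_right_cancel₀ hsne h
  have hd₃ : (w₃ + q₂) * s = s - 2 * nplus - k := by
    have h : ((w₃ + q₂) * s) * s = (s - 2 * nplus - k) * s := by linear_combination hw₃s + hq₂'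
    exact mul_right_cancel₀ hsne h
  have hd₄ : (w₂ + q₂) * s = 2 * nminus - k - s := by
    have h : ((w₂ + q₂) * s) * s = (2 * nminus - k - s) * s := by linear_combination hw₂s + hq₂'
    exact mul_right_cancel₀ hsne h
  -- nonvanishing of denominators
  have hA : s - 2 * nplus + k ≠ 0 := by
    intro h
    have h0 : q₁ * s ^ 2 = 0 := by
      linear_combination hq₁' + ((s + k + 2 * nplus) / 2) * h - (1 / 2) * hs2
    have : q₁ = 0 := by
      have := mul_eq_zero.mp h0
      rcases this with h' | h'
      · exact h'
      · exact absurd h' (pow_ne_zero 2 hsne)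
    linarith
  have hB : 2 * nminus + k - s ≠ 0 := by
    intro h
    have h0 : q₁ * s ^ 2 = 0 := by
      linear_combination hq₁' + ((s + 2 * nminus - k) / 2) * h + (1 / 2) * hs2
    have : q₁ = 0 := by
      rcases mul_eq_zero.mp h0 with h' | h'
      · exact h'
      · exact absurd h' (pow_ne_zero 2 hsne)
    linarith
  have hA₂ : s - 2 * nplus - k ≠ 0 := by
    intro h
    have h0 : q₂ * s ^ 2 = 0 := by
      linear_combination hq₂' + ((s - k + 2 * nplus) / 2) * h - (1 / 2) * hs2
    have : q₂ = 0 := by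
      rcases mul_eq_zero.mp h0 with h' | h'
      · exact h'
      · exact absurd h' (pow_ne_zero 2 hsne)
    linarith
  have hB₂ : 2 * nminus - k - s ≠ 0 := by
    intro h
    have h0 : q₂ * s ^ 2 = 0 := by
      linear_combination hq₂' + ((s + k + 2 * nminus) / 2) * h + (1 / 2) * hs2
    have : q₂ = 0 := by
      rcases mul_eq_zero.mp h0 with h' | h'
      · exact h'
      · exact absurd h' (pow_ne_zero 2 hsne)
    linarith
  have hne₁ : w₃ + q₁ ≠ 0 := by
    intro h; apply hA; rw [← hd₁, h, zero_mul]
  have hne₂ : w₂ + q₁ ≠ 0 := by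
    intro h; apply hB; rw [← hd₂, h, zero_mul]
  have hne₃ : w₃ + q₂ ≠ 0 := by
    intro h; apply hA₂; rw [← hd₃, h, zero_mul]
  have hne₄ : w₂ + q₂ ≠ 0 := by
    intro h; apply hB₂; rw [← hd₄, h, zero_mul]
  have hπ : Real.pi ≠ 0 := Real.pi_ne_zero
  have hΔz' : Δz / (2 * Real.pi) = s / (2 * nplus * nminus) := by
    rw [hΔz]; field_simp
  constructor
  · rw [hΔz']
    have e₃ : w₃ / (w₃ + q₁) = ((s - nplus) ^ 2 - nminus ^ 2) / (s * (s - 2 * nplus + k)) := by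
      rw [div_eq_div_iff hne₁ (by exact mul_ne_zero hsne hA)]
      linear_combination (w₃ + q₁) * hw₃s - (w₃ * s) * hd₁
    have e₂ : w₂ / (w₂ + q₁) = (nplus ^ 2 - (s - nminus) ^ 2) / (s * (2 * nminus + k - s)) := by
      rw [div_eq_div_iff hne₂ (by exact mul_ne_zero hsne hB)]
      linear_combination (w₂ + q₁) * hw₂s - (w₂ * s) * hd₂
    rw [e₃, e₂]
    field_simp
    linear_combination (nminus - nplus + k) * hs2
  · rw [hΔz']
    have e₃ : w₃ / (w₃ + q₂) = ((s - nplus) ^ 2 - nminus ^ 2) / (s * (s - 2 * nplus - k)) := by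
      rw [div_eq_div_iff hne₃ (by exact mul_ne_zero hsne hA₂)]
      linear_combination (w₃ + q₂) * hw₃s - (w₃ * s) * hd₃
    have e₂ : w₂ / (w₂ + q₂) = (nplus ^ 2 - (s - nminus) ^ 2) / (s * (2 * nminus - k - s)) := by
      rw [div_eq_div_iff hne₄ (by exact mul_ne_zero hsne hB₂)]
      linear_combination (w₂ + q₂) * hw₂s - (w₂ * s) * hd₄
    rw [e₃, e₂]
    field_simp
    linear_combination (nminus - nplus - k) * hs2
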